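/- For every positive integer k, the number of ODD colored compositions of k equals the sum, over all binary strings of length k whose first symbol is 1, of the product of the lengths of the maximal runs of 1's in the string. -/

import Mathlib

/-- The number of ODD colored compositions of `ℓ`: compositions where each part
in an odd position `i` (positions counted from 1) gets a color in `{1, …, pᵢ}`,
i.e. `∑` over compositions of `∏` of the parts in odd positions. -/
def oddColoredCount (ℓ : ℕ) : ℕ :=
  ∑ c : Composition ℓ, ∏ i ∈ Finset.range c.blocks.length,
    if (i + 1) % 2 = 1 then c.blocks.getD i 1 else 1

/-- Auxiliary: `runProdOnesAux cur l` is the product of the lengths of the maximal runs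
of `true`s in a binary string that consists of a run of `cur` `true`s followed by `l`. -/
def runProdOnesAux : ℕ → List Bool → ℕ
  | cur, [] => if cur = 0 then 1 else cur
  | cur, (true :: t) => runProdOnesAux (cur + 1) t
  | cur, (false :: t) => (if cur = 0 then 1 else cur) * runProdOnesAux 0 t

/-- The product of the lengths of the maximal runs of `true`s (i.e. 1's) in a binary
string; the empty product (no `true` present) counts as 1. -/
def runProdOnes (l : List Bool) : ℕ := runProdOnesAux 0 l

/-! ### Auxiliary definitions and lemmas -/

/-- Encode a list of run lengths as alternating runs, starting with color `b`. -/
def enc : List ℕ → Bool → List Bool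
  | [], _ => []
  | p :: t, b => List.replicate p b ++ enc t (!b)

/-- Product of entries in odd positions (1-indexed). -/
def oddW : List ℕ → ℕ
  | [] => 1
  | [p] => p
  | p :: _ :: t => p * oddW t

lemma enc_length : ∀ (L : List ℕ) (b : Bool), (enc L b).length = L.sum
  | [], _ => rfl
  | p :: t, b => by simp [enc, enc_length t]

lemma enc_head? : ∀ (L : List ℕ) (b : Bool), (∀ x ∈ L, 0 < x) → L ≠ [] →
    (enc L b).head? = some b
  | [], _, _, h => absurd rfl h
  | p :: t, b, hpos, _ => by
    have hp : 0 < p := hpos p (by simp)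
    obtain ⟨q, rfl⟩ := Nat.exists_eq_add_of_lt hp
    simp [enc, List.replicate_succ]

lemma oddW_eq_prod : ∀ (L : List ℕ),
    oddW L = ∏ i ∈ Finset.range L.length, if (i + 1) % 2 = 1 then L.getD i 1 else 1
  | [] => by simp [oddW]
  | [p] => by simp [oddW]
  | p :: q :: t => by
    rw [oddW, oddW_eq_prod t,
      show (p :: q :: t).length = t.length + 1 + 1 from rfl,
      Finset.prod_range_succ', Finset.prod_range_succ']
    have h1 : ∀ x : ℕ, (p :: q :: t).getD (x + 1 + 1) 1 = t.getD x 1 := fun x => rfl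
    have h2 : ∀ x : ℕ, (x + 1 + 1 + 1) % 2 = (x + 1) % 2 := fun x => by omega
    simp only [h1, h2]
    norm_num [mul_comm]

lemma rpa_rep_true : ∀ (p cur : ℕ) (rest : List Bool),
    runProdOnesAux cur (List.replicate p true ++ rest) = runProdOnesAux (cur + p) rest
  | 0, cur, rest => by simp
  | p + 1, cur, rest => by
    rw [List.replicate_succ, List.cons_append, runProdOnesAux, rpa_rep_true p]
    ring_nf

lemma rpa_rep_false : ∀ (q : ℕ) (rest : List Bool),
    runProdOnesAux 0 (List.replicate q false ++ rest) = runProdOnesAux 0 rest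
  | 0, rest => by simp
  | q + 1, rest => by
    rw [List.replicate_succ, List.cons_append, runProdOnesAux, rpa_rep_false q]
    simp

lemma rpa_enc : ∀ (L : List ℕ), (∀ x ∈ L, 0 < x) →
    runProdOnesAux 0 (enc L true) = oddW L
  | [], _ => rfl
  | [p], hpos => by
    have hp : 0 < p := hpos p (by simp)
    rw [enc, enc, List.append_nil, ← List.append_nil (List.replicate p true),
      rpa_rep_true, runProdOnesAux]
    simp [oddW, hp.ne']
  | p :: q :: t, hpos => by
    have hp : 0 < p := hpos p (by simp)
    have hq : 0 < q := hpos q (by simp)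
    obtain ⟨q', rfl⟩ := Nat.exists_eq_add_of_lt hq
    rw [enc, enc, rpa_rep_true]
    simp only [Bool.not_true, Bool.not_false]
    rw [List.replicate_succ, List.cons_append, runProdOnesAux, rpa_rep_false]
    rw [rpa_enc t (fun x hx => hpos x (by simp [hx]))]
    simp [oddW, hp.ne']

lemma tw_dw (b : Bool) : ∀ (p : ℕ) (r : List Bool), (r ≠ [] → r.head? = some (!b)) →
    (List.replicate p b ++ r).takeWhile (· == b) = List.replicate p b ∧
    (List.replicate p b ++ r).dropWhile (· == b) = r
  | 0, [], _ => by simp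
  | 0, x :: t, h => by
    have : x = !b := by simpa using h (by simp)
    subst this
    simp
  | p + 1, r, h => by
    have ih := tw_dw b p r h
    rw [List.replicate_succ, List.cons_append, List.takeWhile_cons, List.dropWhile_cons]
    simp [ih.1, ih.2, List.replicate_succ]

lemma enc_rest_head (t : List ℕ) (b : Bool) (hpos : ∀ x ∈ t, 0 < x) :
    enc t (!b) ≠ [] → (enc t (!b)).head? = some (!b) := by
  intro h
  apply enc_head? t (!b) hpos
  rintro rfl
  exact h rfl

lemma enc_inj : ∀ (L L' : List ℕ) (b : Bool), (∀ x ∈ L, 0 < x) → (∀ x ∈ L', 0 < x) →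
    enc L b = enc L' b → L = L'
  | [], [], _, _, _, _ => rfl
  | [], p :: t, b, _, hpos', h => by
    have hp : 0 < p := hpos' p (by simp)
    have := congrArg List.length h
    simp [enc, enc_head?] at this
    omega
  | p :: t, [], b, hpos, _, h => by
    have hp : 0 < p := hpos p (by simp)
    have := congrArg List.length h
    simp [enc] at this
    omega
  | p :: t, p' :: t', b, hpos, hpos', h => by
    have h1 := tw_dw b p (enc t (!b)) (enc_rest_head t b (fun x hx => hpos x (by simp [hx])))
    have h2 := tw_dw b p' (enc t' (!b)) (enc_rest_head t' b (fun x hx => hpos' x (by simp [hx])))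
    simp only [enc] at h
    have htw : List.replicate p b = List.replicate p' b := by
      rw [← h1.1, ← h2.1, h]
    have hpp : p = p' := by
      have := congrArg List.length htw; simpa using this
    have hdw : enc t (!b) = enc t' (!b) := by
      rw [← h1.2, ← h2.2, h]
    have := enc_inj t t' (!b) (fun x hx => hpos x (by simp [hx]))
      (fun x hx => hpos' x (by simp [hx])) hdw
    rw [hpp, this]

lemma enc_surj : ∀ (n : ℕ) (s : List Bool) (b : Bool), s.length = n →
    (s ≠ [] → s.head? = some b) → ∃ L, (∀ x ∈ L, 0 < x) ∧ enc L b = s := by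
  intro n
  induction n using Nat.strong_induction_on with
  | _ n ih =>
    intro s b hlen hhead
    match s with
    | [] => exact ⟨[], by simp, rfl⟩
    | x :: t =>
      have hx : x = b := by simpa using hhead (by simp)
      subst hx
      set s := x :: t with hs
      set tw := s.takeWhile (· == x) with htw
      set dw := s.dropWhile (· == x) with hdw
      have htwrep : tw = List.replicate tw.length x := by
        rw [List.eq_replicate_iff]
        exact ⟨rfl, fun y hy => by simpa using List.mem_takeWhile_imp hy⟩
      have hp1 : 0 < tw.length := by
        rw [htw, hs, List.takeWhile_cons]
        simp
      have hdwhead : dw ≠ [] → dw.head? = some (!x) := by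
        intro hne
        have := List.head?_dropWhile_not (· == x) s
        rw [← hdw] at this
        cases hh : dw.head? with
        | none => simp [List.head?_eq_none_iff] at hh; exact absurd hh hne
        | some y =>
          rw [hh] at this
          simp only at this
          have hyx : y = !x := by revert this; cases y <;> cases x <;> decide
          rw [hyx]
      have hsum : tw.length + dw.length = n := by
        have := List.takeWhile_append_dropWhile (p := (· == x)) (l := s)
        have := congrArg List.length this
        simp only [List.length_append] at this
        rw [this, hlen]
      obtain ⟨L', hL'pos, hL'enc⟩ := ih dw.length (by omega) dw (!x) rfl hdwhead
      refine ⟨tw.length :: L', ?_, ?_⟩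
      · intro y hy
        rcases List.mem_cons.mp hy with rfl | hy
        · exact hp1
        · exact hL'pos y hy
      · rw [enc, hL'enc, ← htwrep, htw, hdw]
        exact List.takeWhile_append_dropWhile

lemma ofFn_get_cast {k : ℕ} (l : List Bool) (h : l.length = k) :
    List.ofFn (fun i : Fin k => l.get (Fin.cast h.symm i)) = l := by
  subst h
  exact List.ofFn_get l

/-- The number of ODD colored compositions of `k` equals the sum over all binary
strings of length `k` starting with a 1 of the product of the lengths of the
maximal runs of 1's. -/
theorem oddColoredCount_eq_sum_runProd (k : ℕ) (hk : 0 < k) :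
    oddColoredCount k =
      ∑ f ∈ Finset.univ.filter (fun f : Fin k → Bool => f ⟨0, hk⟩ = true),
        runProdOnes (List.ofFn f) := by
  rw [oddColoredCount]
  have hlen : ∀ c : Composition k, (enc c.blocks true).length = k := fun c => by
    rw [enc_length, c.blocks_sum]
  set F : Composition k → (Fin k → Bool) :=
    fun c => fun i => (enc c.blocks true).get (Fin.cast (hlen c).symm i) with hF
  have hofF : ∀ c : Composition k, List.ofFn (F c) = enc c.blocks true := fun c =>
    ofFn_get_cast _ (hlen c)
  have hpos : ∀ c : Composition k, ∀ x ∈ c.blocks, 0 < x := fun c x hx => c.blocks_pos hx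
  have hne : ∀ c : Composition k, c.blocks ≠ [] := by
    intro c hc
    have := c.blocks_sum
    rw [hc] at this
    simp at this
    omega
  apply Finset.sum_bij (i := fun c _ => F c)
  · intro c _
    rw [Finset.mem_filter]
    refine ⟨Finset.mem_univ _, ?_⟩
    have h0 := enc_head? c.blocks true (hpos c) (hne c)
    have hget : (enc c.blocks true)[(0:ℕ)]'(by rw [hlen c]; exact hk) = true := by
      rw [List.head?_eq_getElem?, List.getElem?_eq_getElem (by rw [hlen c]; exact hk)] at h0
      simpa using h0
    simpa [hF, List.get_eq_getElem] using hget
  · intro c _ c' _ hcc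
    have h1 : enc c.blocks true = enc c'.blocks true := by
      rw [← hofF c, ← hofF c', hcc]
    have := enc_inj _ _ _ (hpos c) (hpos c') h1
    exact Composition.ext this
  · intro f hf
    rw [Finset.mem_filter] at hf
    have hf0 : f ⟨0, hk⟩ = true := hf.2
    have hslen : (List.ofFn f).length = k := by simp
    have hshead : List.ofFn f ≠ [] → (List.ofFn f).head? = some true := by
      intro _
      rw [List.head?_eq_getElem?, List.getElem?_eq_getElem (by simpa using hk)]
      simp only [List.getElem_ofFn]
      rw [← hf0]
    obtain ⟨L, hLpos, hLenc⟩ := enc_surj k (List.ofFn f) true hslen hshead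
    have hLsum : L.sum = k := by
      rw [← enc_length L true, hLenc, hslen]
    refine ⟨⟨L, fun hi => hLpos _ hi, hLsum⟩, Finset.mem_univ _, ?_⟩
    funext i
    have : List.ofFn (F ⟨L, fun hi => hLpos _ hi, hLsum⟩) = List.ofFn f := by
      rw [hofF]; exact hLenc
    have := List.ofFn_injective this
    rw [this]
  · intro c _
    rw [hofF c, runProdOnes, rpa_enc c.blocks (hpos c), oddW_eq_prod]
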